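/- Uniform decay of the greedy index-selection criterion (Lemma 'index selection upper bound'): In the index-selection procedure with initial counts m_k(0) = 0 for all k, for every s ≥ 5 it holds that max_{k ∈ {1,…,5}} f_k( m_k(s) ) ≤ D / √(s − 5), where D = √5 · ( max_{j ∈ {1,…,5}} D_j ) · ( max_{k ∈ {1,…,5}} D_k/d_k ) and the right-hand side is +∞ when s = 5. -/

import Mathlib

open Set
open scoped Classical ENNReal

/-- The criterion functions `f_k` of the index-selection procedure: for `k ∈ {1,2,3}`,
`f_k(n) = d_k/√n`, and for `k ∈ {4,5}`,
`f_k(n) = d_4/√(2^{⌊log₂(n+1)⌋} − 1) + d_5/2^{⌊log₂(n+1)⌋}`,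
with the convention `a/0 = +∞` for `a > 0` (values in `ℝ≥0∞`). -/
noncomputable def fIdx (d : Fin 5 → ℝ) (k : Fin 5) (n : ℕ) : ℝ≥0∞ :=
  if k.val < 3 then
    ENNReal.ofReal (d k) / ENNReal.ofReal (Real.sqrt n)
  else
    ENNReal.ofReal (d 3) / ENNReal.ofReal (Real.sqrt ((2 ^ Nat.log 2 (n + 1) - 1 : ℕ) : ℝ))
      + ENNReal.ofReal (d 4) / ENNReal.ofReal ((2 ^ Nat.log 2 (n + 1) : ℕ) : ℝ)

/-- The constants `D_1 = d_1, D_2 = d_2, D_3 = d_3, D_4 = D_5 = 2(d_4 + d_5)`. -/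
noncomputable def DIdx (d : Fin 5 → ℝ) : Fin 5 → ℝ :=
  ![d 0, d 1, d 2, 2 * (d 3 + d 4), 2 * (d 3 + d 4)]

lemma DIdx_pos (d : Fin 5 → ℝ) (hd : ∀ k, 0 < d k) (k : Fin 5) : 0 < DIdx d k := by
  have h0 := hd 0; have h1 := hd 1; have h2 := hd 2; have h3 := hd 3; have h4 := hd 4
  fin_cases k <;> simp [DIdx] <;> linarith

lemma fIdx_anti (d : Fin 5 → ℝ) (k : Fin 5) : Antitone (fIdx d k) := by
  intro a b hab
  unfold fIdx
  split
  · exact ENNReal.div_le_div_left (ENNReal.ofReal_le_ofReal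
      (Real.sqrt_le_sqrt (by exact_mod_cast hab))) _
  · have hl : Nat.log 2 (a + 1) ≤ Nat.log 2 (b + 1) := Nat.log_mono_right (by omega)
    have hp : (2:ℕ) ^ Nat.log 2 (a + 1) ≤ 2 ^ Nat.log 2 (b + 1) :=
      Nat.pow_le_pow_right (by norm_num) hl
    exact add_le_add
      (ENNReal.div_le_div_left (ENNReal.ofReal_le_ofReal
        (Real.sqrt_le_sqrt (by exact_mod_cast Nat.sub_le_sub_right hp 1))) _)
      (ENNReal.div_le_div_left (ENNReal.ofReal_le_ofReal (by exact_mod_cast hp)) _)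

lemma fIdx_hard (d : Fin 5 → ℝ) (hd : ∀ k, 0 < d k) (n : ℕ) :
    ENNReal.ofReal (d 3) / ENNReal.ofReal (Real.sqrt ((2 ^ Nat.log 2 (n + 1) - 1 : ℕ) : ℝ))
      + ENNReal.ofReal (d 4) / ENNReal.ofReal ((2 ^ Nat.log 2 (n + 1) : ℕ) : ℝ)
      ≤ ENNReal.ofReal (2 * (d 3 + d 4)) / ENNReal.ofReal (Real.sqrt n) := by
  have h3 := hd 3; have h4 := hd 4
  rcases Nat.eq_zero_or_pos n with hn | hn
  · subst hn
    rw [Nat.cast_zero, Real.sqrt_zero, ENNReal.ofReal_zero, ENNReal.div_zero (by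
      simp only [ne_eq, ENNReal.ofReal_eq_zero, not_le]; linarith)]
    exact le_top
  · set L := Nat.log 2 (n + 1) with hL
    have hLbound : n + 1 < 2 ^ (L + 1) := Nat.lt_pow_succ_log_self (by norm_num) _
    have hLle : 2 ^ L ≤ n + 1 := Nat.pow_log_le_self 2 (by omega)
    have hL1 : 1 ≤ L := (Nat.le_log_iff_pow_le (by norm_num) (by omega)).mpr
      (show 2 ^ 1 ≤ n + 1 by omega)
    have h2L : 2 ≤ 2 ^ L := by
      calc (2:ℕ) = 2 ^ 1 := rfl
        _ ≤ 2 ^ L := Nat.pow_le_pow_right (by norm_num) hL1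
    have hps : (2:ℕ) ^ (L + 1) = 2 ^ L * 2 := pow_succ 2 L
    have hA1 : 1 ≤ 2 ^ L - 1 := by omega
    have hAn : n ≤ 2 * (2 ^ L - 1) := by omega
    set A : ℝ := ((2 ^ L - 1 : ℕ) : ℝ) with hA
    set B : ℝ := ((2 ^ L : ℕ) : ℝ) with hB
    have hA1' : (1:ℝ) ≤ A := by rw [hA]; exact_mod_cast hA1
    have hAn' : (n:ℝ) ≤ 2 * A := by rw [hA]; exact_mod_cast hAn
    have hB1 : (1:ℝ) ≤ B := by rw [hB]; exact_mod_cast Nat.one_le_two_pow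
    have hBn : (n:ℝ) ≤ 2 * B := by
      have h : n ≤ 2 * 2 ^ L := by omega
      rw [hB]; exact_mod_cast h
    have hn1 : (1:ℝ) ≤ (n:ℝ) := by exact_mod_cast hn
    have hsnpos : 0 < Real.sqrt n := Real.sqrt_pos.mpr (by linarith)
    have hsApos : 0 < Real.sqrt A := Real.sqrt_pos.mpr (by linarith)
    have hBpos : (0:ℝ) < B := by linarith
    have hsA : Real.sqrt n ≤ 2 * Real.sqrt A := by
      have h1 : Real.sqrt n ≤ Real.sqrt (2 ^ 2 * A) :=
        Real.sqrt_le_sqrt (by nlinarith)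
      rwa [Real.sqrt_mul (by norm_num) A, Real.sqrt_sq (by norm_num)] at h1
    have hsn : Real.sqrt n ≤ 2 * B := by
      have h1 : Real.sqrt n ≤ Real.sqrt ((n:ℝ) ^ 2) := Real.sqrt_le_sqrt (by nlinarith)
      rw [Real.sqrt_sq (by linarith)] at h1
      linarith
    have k1 : d 3 / Real.sqrt A ≤ 2 * d 3 / Real.sqrt n := by
      rw [div_le_div_iff₀ hsApos hsnpos]; nlinarith [hsApos.le, hsnpos.le]
    have k2 : d 4 / B ≤ 2 * d 4 / Real.sqrt n := by
      rw [div_le_div_iff₀ hBpos hsnpos]; nlinarith [hsnpos.le]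
    have key : d 3 / Real.sqrt A + d 4 / B ≤ 2 * (d 3 + d 4) / Real.sqrt n := by
      have k3 : 2 * d 3 / Real.sqrt n + 2 * d 4 / Real.sqrt n
          = 2 * (d 3 + d 4) / Real.sqrt n := by ring
      linarith
    rw [← ENNReal.ofReal_div_of_pos hsApos, ← ENNReal.ofReal_div_of_pos hBpos,
      ← ENNReal.ofReal_div_of_pos hsnpos,
      ← ENNReal.ofReal_add (by positivity) (by positivity)]
    exact ENNReal.ofReal_le_ofReal key

lemma fIdx_le (d : Fin 5 → ℝ) (hd : ∀ k, 0 < d k) (k : Fin 5) (n : ℕ) :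
    fIdx d k n ≤ ENNReal.ofReal (DIdx d k) / ENNReal.ofReal (Real.sqrt n) := by
  fin_cases k
  · simp [fIdx, DIdx]
  · simp [fIdx, DIdx]
  · simp [fIdx, DIdx]
  · simpa [fIdx, DIdx] using fIdx_hard d hd n
  · simpa [fIdx, DIdx] using fIdx_hard d hd n

/-- One step of the greedy index-selection: select the least index maximizing
`f_k(m_k)`. -/
noncomputable def stepIdx (d : Fin 5 → ℝ) (m : Fin 5 → ℕ) : Fin 5 :=
  ((Finset.univ.filter fun k : Fin 5 => ∀ j, fIdx d j (m j) ≤ fIdx d k (m k)).min).untopD 0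

/-- The counts `m_k(s)` of the greedy index-selection procedure started from `m0`. -/
noncomputable def mSeq (d : Fin 5 → ℝ) (m0 : Fin 5 → ℕ) : ℕ → Fin 5 → ℕ
  | 0 => m0
  | s + 1 =>
    Function.update (mSeq d m0 s) (stepIdx d (mSeq d m0 s))
      (mSeq d m0 s (stepIdx d (mSeq d m0 s)) + 1)

lemma stepIdx_max (d : Fin 5 → ℝ) (m : Fin 5 → ℕ) (j : Fin 5) :
    fIdx d j (m j) ≤ fIdx d (stepIdx d m) (m (stepIdx d m)) := by
  obtain ⟨b, -, hb⟩ := Finset.exists_max_image Finset.univ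
    (fun k : Fin 5 => fIdx d k (m k)) Finset.univ_nonempty
  set F := Finset.univ.filter fun k : Fin 5 => ∀ j, fIdx d j (m j) ≤ fIdx d k (m k) with hF
  have hne : F.Nonempty := ⟨b, by
    simp only [hF, Finset.mem_filter, Finset.mem_univ, true_and]
    exact fun j => hb j (Finset.mem_univ j)⟩
  have hmem := F.min'_mem hne
  have hstep : stepIdx d m = F.min' hne := by
    unfold stepIdx
    rw [← hF, ← Finset.coe_min' hne, WithTop.untopD_coe]
  rw [hstep]
  exact (Finset.mem_filter.mp hmem).2 j

lemma mSeq_sum (d : Fin 5 → ℝ) (s : ℕ) : ∑ k, mSeq d (fun _ => 0) s k = s := by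
  induction s with
  | zero => simp [mSeq]
  | succ s ih =>
    set i := stepIdx d (mSeq d (fun _ => 0) s)
    rw [show mSeq d (fun _ => 0) (s + 1)
        = Function.update (mSeq d (fun _ => 0) s) i (mSeq d (fun _ => 0) s i + 1) from rfl,
      Finset.sum_update_of_mem (Finset.mem_univ i)]
    have h2 := Finset.sum_eq_sum_sdiff_singleton_add (Finset.mem_univ i) (mSeq d (fun _ => 0) s)
    omega

lemma invariant (d : Fin 5 → ℝ) (hd : ∀ k, 0 < d k) (s : ℕ) :
    ∀ j k : Fin 5, fIdx d j (mSeq d (fun _ => 0) s j)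
      ≤ ENNReal.ofReal (DIdx d k)
        / ENNReal.ofReal (Real.sqrt ((mSeq d (fun _ => 0) s k - 1 : ℕ) : ℝ)) := by
  induction s with
  | zero =>
    intro j k
    rw [show mSeq d (fun _ => 0) 0 k = 0 from rfl]
    norm_num
    rw [ENNReal.div_zero (by
      simp only [ne_eq, ENNReal.ofReal_eq_zero, not_le]; exact DIdx_pos d hd k)]
    exact le_top
  | succ s ih =>
    intro j k
    set m := mSeq d (fun _ => 0) s with hm
    set i := stepIdx d m with hi
    have hdef : mSeq d (fun _ => 0) (s + 1) = Function.update m i (m i + 1) := rfl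
    have hdec : ∀ j', fIdx d j' (mSeq d (fun _ => 0) (s + 1) j') ≤ fIdx d j' (m j') := by
      intro j'
      by_cases hj : j' = i
      · rw [hdef, hj, Function.update_self]
        exact fIdx_anti d i (Nat.le_succ _)
      · rw [hdef, Function.update_of_ne hj]
    by_cases hk : k = i
    · have hc : mSeq d (fun _ => 0) (s + 1) k - 1 = m k := by
        rw [hdef, hk, Function.update_self]
        omega
      rw [hc, hk]
      calc fIdx d j (mSeq d (fun _ => 0) (s + 1) j) ≤ fIdx d j (m j) := hdec j
        _ ≤ fIdx d i (m i) := stepIdx_max d m j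
        _ ≤ _ := fIdx_le d hd i (m i)
    · have hc : mSeq d (fun _ => 0) (s + 1) k = m k := by
        rw [hdef, Function.update_of_ne hk]
      rw [hc]
      exact le_trans (hdec j) (ih j k)

/-- Uniform decay of the greedy index-selection criterion: starting from zero counts,
for every `s ≥ 5` we have `max_k f_k(m_k(s)) ≤ D/√(s−5)` (interpreted as `+∞` when
`s = 5`), where `D = √5·(max_j D_j)·(max_k D_k/d_k)`. -/
theorem greedy_index_selection_upper_bound
    (d : Fin 5 → ℝ) (hd : ∀ k, 0 < d k) :
    ∀ s : ℕ, 5 ≤ s → ∀ k : Fin 5,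
      fIdx d k (mSeq d (fun _ => 0) s k)
        ≤ ENNReal.ofReal
              (Real.sqrt 5 * (Finset.univ.sup' Finset.univ_nonempty (DIdx d))
                * (Finset.univ.sup' Finset.univ_nonempty fun j => DIdx d j / d j))
            / ENNReal.ofReal (Real.sqrt ((s : ℝ) - 5)) := by
  intro s hs k
  set supD := Finset.univ.sup' Finset.univ_nonempty (DIdx d) with hsupD
  set supR := Finset.univ.sup' Finset.univ_nonempty (fun j => DIdx d j / d j) with hsupR
  have hDle : ∀ k' : Fin 5, DIdx d k' ≤ supD := fun k' =>
    Finset.le_sup' (DIdx d) (Finset.mem_univ k')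
  have hsupDpos : 0 < supD := lt_of_lt_of_le (DIdx_pos d hd 0) (hDle 0)
  have hR1 : (1:ℝ) ≤ supR := by
    have h0 : DIdx d 0 / d 0 = 1 := by
      have : DIdx d 0 = d 0 := rfl
      rw [this, div_self (hd 0).ne']
    calc (1:ℝ) = DIdx d 0 / d 0 := h0.symm
      _ ≤ supR := Finset.le_sup' (fun j : Fin 5 => DIdx d j / d j) (Finset.mem_univ 0)
  have h5pos : (0:ℝ) < Real.sqrt 5 := Real.sqrt_pos.mpr (by norm_num)
  have hNpos : 0 < Real.sqrt 5 * supD * supR := by positivity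
  -- pigeonhole
  obtain ⟨b, -, hb⟩ := Finset.exists_max_image Finset.univ
    (mSeq d (fun _ => 0) s) Finset.univ_nonempty
  have hsum := mSeq_sum d s
  have hcard : s ≤ 5 * mSeq d (fun _ => 0) s b := by
    have h1 : ∑ x, mSeq d (fun _ => 0) s x
        ≤ Finset.univ.card • mSeq d (fun _ => 0) s b :=
      Finset.sum_le_card_nsmul _ _ _ (fun x _ => hb x (Finset.mem_univ x))
    simp only [Finset.card_univ, Fintype.card_fin, smul_eq_mul] at h1
    omega
  set mb := mSeq d (fun _ => 0) s b with hmb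
  have hinv := invariant d hd s k b
  rcases eq_or_lt_of_le hs with hs5 | hs6
  · -- s = 5 : RHS is ⊤
    rw [← hs5]
    norm_num
    rw [ENNReal.div_zero (by
      simp only [ne_eq, ENNReal.ofReal_eq_zero, not_le]; exact hNpos)]
    exact le_top
  · -- s ≥ 6
    have hs6' : 6 ≤ s := hs6
    have hmb1 : 1 ≤ mb := by omega
    have hnat : s - 5 ≤ 5 * (mb - 1) := by omega
    have hA : ((mb - 1 : ℕ) : ℝ) = (mb : ℝ) - 1 := by
      push_cast [hmb1]; ring
    have hAreal : (s:ℝ) - 5 ≤ 5 * ((mb - 1 : ℕ) : ℝ) := by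
      rw [hA]
      have h1 : (s:ℝ) ≤ 5 * (mb:ℝ) := by exact_mod_cast hcard
      linarith
    have hApos : (0:ℝ) < ((mb - 1 : ℕ) : ℝ) := by
      have : 1 ≤ mb - 1 := by omega
      exact_mod_cast Nat.lt_of_lt_of_le Nat.zero_lt_one this
    have hsApos : 0 < Real.sqrt ((mb - 1 : ℕ) : ℝ) := Real.sqrt_pos.mpr hApos
    have hspos : (0:ℝ) < (s:ℝ) - 5 := by
      have : (6:ℝ) ≤ (s:ℝ) := by exact_mod_cast hs6'
      linarith
    have hssqrt : 0 < Real.sqrt ((s:ℝ) - 5) := Real.sqrt_pos.mpr hspos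
    have hsqA : Real.sqrt ((s:ℝ) - 5) ≤ Real.sqrt 5 * Real.sqrt ((mb - 1 : ℕ) : ℝ) := by
      have h1 : Real.sqrt ((s:ℝ) - 5) ≤ Real.sqrt (5 * ((mb - 1 : ℕ) : ℝ)) :=
        Real.sqrt_le_sqrt hAreal
      rwa [Real.sqrt_mul (by norm_num) _] at h1
    have key : DIdx d b / Real.sqrt ((mb - 1 : ℕ) : ℝ)
        ≤ (Real.sqrt 5 * supD * supR) / Real.sqrt ((s:ℝ) - 5) := by
      rw [div_le_div_iff₀ hsApos hssqrt]
      have hDb := hDle b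
      have hDbpos := DIdx_pos d hd b
      nlinarith [hsApos.le, hssqrt.le, h5pos.le, hsupDpos.le,
        mul_le_mul_of_nonneg_left hsqA hDbpos.le,
        mul_le_mul_of_nonneg_right hDb (mul_nonneg h5pos.le hsApos.le),
        mul_le_mul_of_nonneg_right hR1 (mul_nonneg (mul_nonneg h5pos.le hsupDpos.le) hsApos.le)]
    calc fIdx d k (mSeq d (fun _ => 0) s k)
        ≤ ENNReal.ofReal (DIdx d b) / ENNReal.ofReal (Real.sqrt ((mb - 1 : ℕ) : ℝ)) := hinv
      _ = ENNReal.ofReal (DIdx d b / Real.sqrt ((mb - 1 : ℕ) : ℝ)) :=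
          (ENNReal.ofReal_div_of_pos hsApos).symm
      _ ≤ ENNReal.ofReal ((Real.sqrt 5 * supD * supR) / Real.sqrt ((s:ℝ) - 5)) :=
          ENNReal.ofReal_le_ofReal key
      _ = _ := ENNReal.ofReal_div_of_pos hssqrt
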